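/- Set s = q + 2 + q⁻¹ ∈ ℚ(q). The series φ₋₂,₁(q,t) is invertible in ℚ(q)[[t]]. For every i ∈ ℤ (negative exponents denoting inverse powers), every integer j ≥ 0, and every d ≥ 0, the coefficient of t^d in φ₋₂,₁(q,t)^i · φ₀,₁(q,t)^j lies in the ℚ-linear span of { s^k : k ∈ ℤ, k ≥ i } inside ℚ(q). -/

import Mathlib

noncomputable section

open PowerSeries

/-- The field `ℚ(q)` of rational functions in `q`. -/
abbrev K : Type := RatFunc ℚ

/-- The variable `q ∈ ℚ(q)`. -/
def q : K := RatFunc.X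

/-- `s = q + 2 + q⁻¹`. -/
def s : K := q + 2 + q⁻¹

/-- The `m`-th factor of the infinite product defining `φ_{-2,1}`. -/
def phiFactor (m : ℕ) : PowerSeries K :=
  (1 + C q * X ^ m) ^ 2 * (1 + C q⁻¹ * X ^ m) ^ 2 * ((1 - X ^ m)⁻¹) ^ 4

/-- The infinite product `∏_{m ≥ 1} (1 + q tᵐ)² (1 + q⁻¹ tᵐ)² (1 - tᵐ)⁻⁴`, convergent in the
`t`-adic topology: the coefficient of `t^d` equals that of any partial product
`∏_{m=1}^{N}` with `N ≥ d`, since the `m`-th factor is `≡ 1 mod t^m`. -/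
def phiProd : PowerSeries K :=
  PowerSeries.mk fun d => coeff d (∏ m ∈ Finset.Icc 1 d, phiFactor m)

/-- The weak Jacobi form `φ_{-2,1}(q,t)` of weight `-2` and index `1`. -/
def phi : PowerSeries K := C s * phiProd

/-- The Weierstraß elliptic function expansion
`℘(q,t) = -1/12 + q/(1+q)² - ∑_{d≥1} (∑_{m|d} m((-q)^m - 2 + (-q)^{-m})) t^d`. -/
def wp : PowerSeries K :=
  PowerSeries.mk fun d =>
    if d = 0 then -(1 / 12) + q / (1 + q) ^ 2
    else -∑ m ∈ d.divisors, (m : K) * ((-q) ^ (m : ℤ) - 2 + (-q) ^ (-(m : ℤ)))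

/-- The weak Jacobi form `φ_{0,1}(q,t) = 12 ℘(q,t) φ_{-2,1}(q,t)` of weight `0` and index `1`. -/
def phi01 : PowerSeries K := 12 * wp * phi


/-- Integer powers of `φ_{-2,1}` in `ℚ(q)[[t]]`: negative exponents denote powers of the
inverse power series (which exists since the constant term `s = q + 2 + q⁻¹` is nonzero). -/
def phiZpow (i : ℤ) : PowerSeries K :=
  if 0 ≤ i then phi ^ i.toNat else (phi⁻¹) ^ (-i).toNat

lemma hq0 : q ≠ 0 := RatFunc.X_ne_zero

lemma h1q : (1 : K) + q ≠ 0 := by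
  have : (1 : K) + q = algebraMap (Polynomial ℚ) (RatFunc ℚ) (Polynomial.X + Polynomial.C 1) := by
    simp [q, map_add, RatFunc.algebraMap_X]; ring
  rw [this]
  exact RatFunc.algebraMap_ne_zero (Polynomial.X_add_C_ne_zero 1)

lemma s_eq : s = (1 + q) ^ 2 / q := by
  rw [eq_div_iff hq0, s]
  ring_nf
  rw [mul_inv_cancel₀ hq0]
  ring

lemma hs0 : s ≠ 0 := by
  rw [s_eq]
  exact div_ne_zero (pow_ne_zero 2 h1q) hq0

lemma s_inv_eq : q / (1 + q) ^ 2 = s⁻¹ := by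
  rw [s_eq, inv_div]

/-- polynomial subalgebra ℚ[s] -/
def R : Subalgebra ℚ K := Algebra.adjoin ℚ {s}

lemma s_mem_R : s ∈ R := Algebra.subset_adjoin rfl

def M (i : ℤ) : Submodule ℚ K := Submodule.span ℚ {x : K | ∃ k : ℤ, i ≤ k ∧ x = s ^ k}

lemma M_mono {i i' : ℤ} (h : i ≤ i') : M i' ≤ M i := by
  apply Submodule.span_mono
  rintro x ⟨k, hk, rfl⟩
  exact ⟨k, le_trans h hk, rfl⟩

lemma zpow_mem_M {i k : ℤ} (h : i ≤ k) : s ^ k ∈ M i :=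
  Submodule.subset_span ⟨k, h, rfl⟩

lemma M_mul {i i' : ℤ} {x y : K} (hx : x ∈ M i) (hy : y ∈ M i') : x * y ∈ M (i + i') := by
  have h := Submodule.mul_mem_mul hx hy
  rw [M, M, Submodule.span_mul_span] at h
  refine Submodule.span_mono ?_ h
  rintro z hz
  rw [Set.mem_mul] at hz
  obtain ⟨a, ⟨k, hk, rfl⟩, b, ⟨k', hk', rfl⟩, rfl⟩ := hz
  exact ⟨k + k', add_le_add hk hk', (zpow_add₀ hs0 k k').symm⟩

lemma R_le_M0 {x : K} (hx : x ∈ R) : x ∈ M 0 := by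
  have hx' : x ∈ Submodule.span ℚ ((Submonoid.closure {s} : Submonoid K) : Set K) := by
    rw [← Algebra.adjoin_eq_span]
    exact hx
  refine Submodule.span_mono ?_ hx'
  intro y hy
  obtain ⟨n, rfl⟩ := Submonoid.mem_closure_singleton.mp hy
  exact ⟨(n : ℤ), Int.ofNat_nonneg n, (zpow_natCast s n).symm⟩

/-- coefficients in R -/
def QR (f : PowerSeries K) : Prop := ∀ d, coeff d f ∈ R

lemma QR_one : QR 1 := by
  intro d
  rw [PowerSeries.coeff_one]
  split <;> [exact R.one_mem; exact R.zero_mem]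

lemma QR_mul {f g : PowerSeries K} (hf : QR f) (hg : QR g) : QR (f * g) := by
  intro d
  rw [PowerSeries.coeff_mul]
  exact Subalgebra.sum_mem R fun x _ => R.mul_mem (hf _) (hg _)

lemma QR_pow {f : PowerSeries K} (hf : QR f) (n : ℕ) : QR (f ^ n) := by
  induction n with
  | zero => simpa using QR_one
  | succ n ih => rw [pow_succ]; exact QR_mul ih hf

lemma QR_add {f g : PowerSeries K} (hf : QR f) (hg : QR g) : QR (f + g) := by
  intro d; rw [map_add]; exact R.add_mem (hf d) (hg d)

lemma QR_sub {f g : PowerSeries K} (hf : QR f) (hg : QR g) : QR (f - g) := by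
  intro d; rw [map_sub]; exact R.sub_mem (hf d) (hg d)

lemma QR_C_mul_X_pow {a : K} (ha : a ∈ R) (m : ℕ) : QR (C a * X ^ m) := by
  intro d
  rw [PowerSeries.coeff_C_mul, PowerSeries.coeff_X_pow]
  split <;> simp only [mul_one, mul_zero] <;> [exact ha; exact R.zero_mem]

lemma QR_X_pow (m : ℕ) : QR ((X : PowerSeries K) ^ m) := by
  have := QR_C_mul_X_pow R.one_mem m
  simpa using this

lemma QR_inv {f : PowerSeries K} (hf : QR f) (h1 : constantCoeff f = 1) : QR f⁻¹ := by
  intro d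
  induction d using Nat.strong_induction_on with
  | _ d ih =>
    rw [PowerSeries.coeff_inv]
    split
    · rw [h1, inv_one]; exact R.one_mem
    · rw [h1, inv_one, neg_one_mul]
      refine R.neg_mem (Subalgebra.sum_mem R fun x hx => ?_)
      split
      · exact R.mul_mem (hf _) (ih x.2 (by assumption))
      · exact R.zero_mem

lemma factor_key (m : ℕ) :
    (1 + C q * X ^ m) * (1 + C q⁻¹ * X ^ m)
      = 1 + C (s - 2) * X ^ m + X ^ m * X ^ m := by
  have hC : C q * C q⁻¹ = 1 := by
    rw [← map_mul, mul_inv_cancel₀ hq0, map_one]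
  have hs2 : C (s - 2) = C q + C q⁻¹ := by
    rw [s, show q + 2 + q⁻¹ - 2 = q + q⁻¹ from by ring, map_add]
  calc (1 + C q * X ^ m) * (1 + C q⁻¹ * X ^ m)
      = 1 + (C q + C q⁻¹) * X ^ m + (C q * C q⁻¹) * (X ^ m * X ^ m) := by ring
    _ = 1 + C (s - 2) * X ^ m + X ^ m * X ^ m := by rw [hC, hs2, one_mul]

lemma s_sub_two_mem_R : s - 2 ∈ R := R.sub_mem s_mem_R (Subalgebra.natCast_mem R 2)

lemma QR_one_sub_X_pow_inv {m : ℕ} (hm : m ≠ 0) : QR ((1 - (X : PowerSeries K) ^ m)⁻¹) := by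
  refine QR_inv (QR_sub QR_one (QR_X_pow m)) ?_
  rw [map_sub, map_one, map_pow, constantCoeff_X, zero_pow hm, sub_zero]

lemma QR_phiFactor {m : ℕ} (hm : m ≠ 0) : QR (phiFactor m) := by
  rw [phiFactor, ← mul_pow, factor_key]
  exact QR_mul
    (QR_pow (QR_add (QR_add QR_one (QR_C_mul_X_pow s_sub_two_mem_R m))
      (QR_mul (QR_X_pow m) (QR_X_pow m))) 2)
    (QR_pow (QR_one_sub_X_pow_inv hm) 4)

lemma QR_phiProd : QR phiProd := by
  intro d
  rw [phiProd, coeff_mk]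
  have : QR (∏ m ∈ Finset.Icc 1 d, phiFactor m) := by
    refine Finset.prod_induction _ QR (fun a b => QR_mul) QR_one ?_
    intro m hm
    exact QR_phiFactor (by simp at hm; omega)
  exact this d

lemma pow_add_inv_pow_mem {u : K} (hu : u ≠ 0) (h : u + u⁻¹ ∈ R) (n : ℕ) :
    u ^ n + u⁻¹ ^ n ∈ R := by
  have huu : u * u⁻¹ = 1 := mul_inv_cancel₀ hu
  have key : ∀ n : ℕ, u ^ n + u⁻¹ ^ n ∈ R ∧ u ^ (n + 1) + u⁻¹ ^ (n + 1) ∈ R := by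
    intro n
    induction n with
    | zero =>
      constructor
      · simpa using R.add_mem R.one_mem R.one_mem
      · simpa using h
    | succ n ih =>
      refine ⟨ih.2, ?_⟩
      have hid : u ^ (n + 2) + u⁻¹ ^ (n + 2)
          = (u + u⁻¹) * (u ^ (n + 1) + u⁻¹ ^ (n + 1)) - (u ^ n + u⁻¹ ^ n) := by
        have e1 : u * u⁻¹ ^ (n + 1) = u⁻¹ ^ n := by
          rw [pow_succ', ← mul_assoc, huu, one_mul]
        have e2 : u⁻¹ * u ^ (n + 1) = u ^ n := by
          rw [pow_succ', ← mul_assoc, inv_mul_cancel₀ hu, one_mul]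
        linear_combination -e1 - e2
      rw [show n + 1 + 1 = n + 2 from rfl, hid]
      exact R.sub_mem (R.mul_mem h ih.2) ih.1
  exact (key n).1

lemma neg_q_add_inv_mem : (-q) + (-q)⁻¹ ∈ R := by
  have : (-q) + (-q)⁻¹ = -(s - 2) := by
    rw [s, inv_neg]; ring
  rw [this]
  exact R.neg_mem s_sub_two_mem_R

lemma wp_coeff_mem (d : ℕ) : coeff d wp ∈ M (-1) := by
  rw [wp, coeff_mk]
  split
  · rw [s_inv_eq]
    refine Submodule.add_mem _ ?_ ?_
    · have h1mem : (1 : K) ∈ M (-1) := by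
        have := zpow_mem_M (show (-1 : ℤ) ≤ 0 by norm_num)
        rwa [zpow_zero] at this
      have hm := (M (-1)).smul_mem (-(1/12) : ℚ) h1mem
      rwa [Algebra.smul_def, eq_ratCast (algebraMap ℚ K), mul_one,
        show ((-(1/12) : ℚ) : K) = -(1/12 : K) from by norm_num] at hm
    · rw [show s⁻¹ = s ^ (-1 : ℤ) from (zpow_neg_one s).symm]
      exact zpow_mem_M le_rfl
  · refine M_mono (by norm_num : (-1 : ℤ) ≤ 0) (R_le_M0 ?_)
    refine R.neg_mem (Subalgebra.sum_mem R fun m hm => R.mul_mem (Subalgebra.natCast_mem R m) ?_)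
    have h1 : (-q) ^ (m : ℤ) = (-q) ^ m := zpow_natCast _ m
    have h2 : (-q) ^ (-(m : ℤ)) = (-q)⁻¹ ^ m := by
      rw [zpow_neg, zpow_natCast, inv_pow]
    rw [h1, h2, show (-q) ^ m - 2 + (-q)⁻¹ ^ m = ((-q) ^ m + (-q)⁻¹ ^ m) - 2 from by ring]
    exact R.sub_mem (pow_add_inv_pow_mem (neg_ne_zero.mpr hq0) neg_q_add_inv_mem m)
      (Subalgebra.natCast_mem R 2)

def P (i : ℤ) (f : PowerSeries K) : Prop := ∀ d, coeff d f ∈ M i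

lemma P_of_QR {f : PowerSeries K} (hf : QR f) : P 0 f := fun d => R_le_M0 (hf d)

lemma P_mul {i i' : ℤ} {f g : PowerSeries K} (hf : P i f) (hg : P i' g) :
    P (i + i') (f * g) := by
  intro d
  rw [PowerSeries.coeff_mul]
  exact Submodule.sum_mem _ fun x _ => M_mul (hf _) (hg _)

lemma P_one : P 0 1 := by
  intro d
  rw [PowerSeries.coeff_one]
  split
  · have := zpow_mem_M (le_refl (0 : ℤ)); rwa [zpow_zero] at this
  · exact (M 0).zero_mem

lemma P_pow {a : ℤ} {f : PowerSeries K} (hf : P a f) (n : ℕ) : P ((n : ℤ) * a) (f ^ n) := by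
  induction n with
  | zero => simpa using P_one
  | succ n ih =>
    have h : ((n + 1 : ℕ) : ℤ) * a = (n : ℤ) * a + a := by push_cast; ring
    rw [pow_succ, h]
    exact P_mul ih hf

lemma P_phi : P 1 phi := by
  intro d
  rw [phi, PowerSeries.coeff_C_mul]
  have h1 : s ∈ M 1 := by
    have := zpow_mem_M (le_refl (1 : ℤ)); rwa [zpow_one] at this
  simpa using M_mul h1 (P_of_QR QR_phiProd d)

lemma constCoeff_phiProd : constantCoeff phiProd = 1 := by
  have : constantCoeff phiProd = coeff 0 phiProd := by
    rw [← PowerSeries.coeff_zero_eq_constantCoeff]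
  rw [this, phiProd, coeff_mk]
  simp

lemma constCoeff_phi : constantCoeff phi = s := by
  rw [phi, map_mul, constantCoeff_C, constCoeff_phiProd, mul_one]

lemma phi_inv_eq : phi⁻¹ = C s⁻¹ * phiProd⁻¹ := by
  rw [phi, PowerSeries.mul_inv_rev, PowerSeries.C_inv]
  rw [mul_comm]

lemma P_phi_inv : P (-1) phi⁻¹ := by
  intro d
  rw [phi_inv_eq, PowerSeries.coeff_C_mul]
  have h1 : s⁻¹ ∈ M (-1) := by
    have := zpow_mem_M (le_refl (-1 : ℤ)); rwa [zpow_neg_one] at this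
  simpa using M_mul h1 (P_of_QR (QR_inv QR_phiProd constCoeff_phiProd) d)

lemma P_phi01 : P 0 phi01 := by
  intro d
  have h12 : phi01 = C 12 * (wp * phi) := by
    rw [phi01, show (12 : PowerSeries K) = C 12 from (map_ofNat (C : K →+* K⟦X⟧) 12).symm, mul_assoc]
  rw [h12, PowerSeries.coeff_C_mul]
  have hwp : P 0 (wp * phi) := by
    have := P_mul (show P (-1) wp from wp_coeff_mem) P_phi
    simpa using this
  have := (M 0).smul_mem (12 : ℚ) (hwp d)
  rwa [Algebra.smul_def, eq_ratCast (algebraMap ℚ K),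
    show ((12 : ℚ) : K) = (12 : K) from by simp [Rat.cast_def]] at this

lemma P_phiZpow (i : ℤ) : P i (phiZpow i) := by
  rw [phiZpow]
  split
  · rename_i h
    have := P_pow P_phi i.toNat
    rwa [mul_one, Int.toNat_of_nonneg h] at this
  · rename_i h
    have := P_pow P_phi_inv (-i).toNat
    rwa [mul_neg_one, Int.toNat_of_nonneg (by omega), neg_neg] at this


/-- `φ_{-2,1}(q,t)` is invertible in `ℚ(q)[[t]]`, and for every `i ∈ ℤ`,
`j ≥ 0` and `d ≥ 0` the coefficient of `t^d` in `φ_{-2,1}^i φ_{0,1}^j` lies in the `ℚ`-linear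
span of the powers `s^k`, `k ≥ i`, where `s = q + 2 + q⁻¹`. -/
theorem coeff_phiZpow_mul_phi01_pow_mem_span :
    IsUnit phi ∧
    ∀ (i : ℤ) (j d : ℕ),
      coeff d (phiZpow i * phi01 ^ j) ∈
        Submodule.span ℚ {x : K | ∃ k : ℤ, i ≤ k ∧ x = s ^ k} := by
  constructor
  · exact IsUnit.of_mul_eq_one (a := phi) phi⁻¹
      (PowerSeries.mul_inv_cancel phi (by rw [constCoeff_phi]; exact hs0))
  · intro i j d
    have := P_mul (P_phiZpow i) (P_pow P_phi01 j)
    rw [mul_zero, add_zero] at this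
    exact this d


end
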